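/- Let ρ < 0 and suppose λ(t) ≥ μ(t) ≥ ν(t) solve λ' = 2λ²+2μν−4ρλ(λ+μ+ν), μ' = 2μ²+2λν−4ρμ(λ+μ+ν), ν' = 2ν²+2λμ−4ρν(λ+μ+ν) on an interval where μ+ν < 0. Then the function Λ(t) = −λ/(μ+ν) − (1/(2(1−2ρ))) log(−μ−ν) satisfies Λ' = 2(μ+ν)^{-2} J, where J = λ(μ²+ν²) − (μ+ν)μν − (1/(2(1−2ρ)))(μ+ν)(μ²+ν²) − (1/(2(1−2ρ)))λ(μ+ν)² + (ρ/(1−2ρ))(μ+ν)²(λ+μ+ν). -/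

import Mathlib

theorem stmt_15 (ρ : ℝ) (hρ : ρ < 0) (I : Set ℝ) (hI : IsOpen I)
    (l m n : ℝ → ℝ)
    (hl : ∀ t ∈ I, HasDerivAt l
      (2*(l t)^2 + 2*(m t)*(n t) - 4*ρ*(l t)*(l t + m t + n t)) t)
    (hm : ∀ t ∈ I, HasDerivAt m
      (2*(m t)^2 + 2*(l t)*(n t) - 4*ρ*(m t)*(l t + m t + n t)) t)
    (hn : ∀ t ∈ I, HasDerivAt n
      (2*(n t)^2 + 2*(l t)*(m t) - 4*ρ*(n t)*(l t + m t + n t)) t)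
    (hord : ∀ t ∈ I, l t ≥ m t ∧ m t ≥ n t)
    (hneg : ∀ t ∈ I, m t + n t < 0)
    (t : ℝ) (ht : t ∈ I) :
    HasDerivAt
      (fun s => -(l s) / (m s + n s) - (1/(2*(1 - 2*ρ))) * Real.log (-(m s) - n s))
      (2 * ((m t + n t)^2)⁻¹ *
        (l t * ((m t)^2 + (n t)^2) - (m t + n t)*(m t)*(n t)
          - (1/(2*(1 - 2*ρ)))*(m t + n t)*((m t)^2 + (n t)^2)
          - (1/(2*(1 - 2*ρ)))*(l t)*(m t + n t)^2
          + (ρ/(1 - 2*ρ))*(m t + n t)^2*(l t + m t + n t))) t := by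
  have hL := hl t ht
  have hM := hm t ht
  have hN := hn t ht
  have hmt : m t + n t < 0 := hneg t ht
  have hmn : m t + n t ≠ 0 := ne_of_lt hmt
  have hpos : -(m t) - n t ≠ 0 := by intro h; apply hmn; linarith
  have hρ2 : (1 : ℝ) - 2*ρ ≠ 0 := by nlinarith
  have h1 := (hL.neg).div (hM.add hN) hmn
  have h2 := (((hM.neg).sub hN).log hpos).const_mul (1/(2*(1 - 2*ρ)))
  have h := h1.sub h2
  convert h using 1
  · rfl
  · rfl
  · rfl
  simp only [Pi.add_apply, Pi.neg_apply, Pi.sub_apply]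
  field_simp
  ring
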